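/- Fix β > 0, J > 0, J₀ ∈ ℝ, h ∈ ℝ, and define F : ℝ → ℝ by F(u) := −βJu²/2 + log( cosh(βJu + βh) + √( sinh(βJu + βh)² + e^{−4βJ₀} ) ). Then F is differentiable on ℝ, and every critical point u* of F (F′(u*) = 0) satisfies the generalized Curie–Weiss mean-field equation u* = sinh(βJu* + βh) / √( sinh(βJu* + βh)² + e^{−4βJ₀} ). -/

import Mathlib

open Real

noncomputable def rateF (β J J₀ h : ℝ) (u : ℝ) : ℝ :=
  -(β * J * u ^ 2) / 2 +
    Real.log (Real.cosh (β * J * u + β * h) +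
      Real.sqrt ((Real.sinh (β * J * u + β * h)) ^ 2 + Real.exp (-(4 * β * J₀))))

lemma hasDerivAt_rateF (β J J₀ h u : ℝ) :
    HasDerivAt (rateF β J J₀ h)
      (-(β * J * u) + β * J * Real.sinh (β * J * u + β * h) /
        Real.sqrt ((Real.sinh (β * J * u + β * h)) ^ 2 + Real.exp (-(4 * β * J₀)))) u := by
  set x := β * J * u + β * h with hxdef
  set S := Real.sinh x with hSdef
  set C := Real.cosh x with hCdef
  have hQpos : 0 < S ^ 2 + Real.exp (-(4 * β * J₀)) := by positivity
  set Q := Real.sqrt (S ^ 2 + Real.exp (-(4 * β * J₀))) with hQdef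
  have hQpos' : 0 < Q := Real.sqrt_pos.mpr hQpos
  have hx : HasDerivAt (fun u : ℝ => β * J * u + β * h) (β * J) u := by
    simpa using ((hasDerivAt_id u).const_mul (β * J)).add_const (β * h)
  have hC : HasDerivAt (fun u : ℝ => Real.cosh (β * J * u + β * h)) (S * (β * J)) u := hx.cosh
  have hS : HasDerivAt (fun u : ℝ => Real.sinh (β * J * u + β * h)) (C * (β * J)) u := hx.sinh
  have hsq : HasDerivAt
      (fun u : ℝ => (Real.sinh (β * J * u + β * h)) ^ 2 + Real.exp (-(4 * β * J₀)))
      (2 * S ^ 1 * (C * (β * J))) u := (hS.pow 2).add_const _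
  have hsqrt : HasDerivAt
      (fun u : ℝ => Real.sqrt ((Real.sinh (β * J * u + β * h)) ^ 2 + Real.exp (-(4 * β * J₀))))
      (2 * S ^ 1 * (C * (β * J)) / (2 * Q)) u := hsq.sqrt (ne_of_gt hQpos)
  have hCQpos : 0 < C + Q := by
    have : (1:ℝ) ≤ C := Real.one_le_cosh x
    linarith
  have hlog : HasDerivAt
      (fun u : ℝ => Real.log (Real.cosh (β * J * u + β * h) +
        Real.sqrt ((Real.sinh (β * J * u + β * h)) ^ 2 + Real.exp (-(4 * β * J₀)))))
      ((S * (β * J) + 2 * S ^ 1 * (C * (β * J)) / (2 * Q)) / (C + Q)) u :=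
    (hC.add hsqrt).log (ne_of_gt hCQpos)
  have hquad : HasDerivAt (fun u : ℝ => -(β * J * u ^ 2) / 2) (-(β * J * u)) u := by
    have := (((hasDerivAt_pow 2 u).const_mul (β * J)).neg.div_const 2)
    convert this using 1
    all_goals first | rfl | ring
  have := hquad.add hlog
  convert this using 1
  have hQsq : Q ^ 2 = S ^ 2 + Real.exp (-(4 * β * J₀)) := Real.sq_sqrt hQpos.le
  have hCsq : C ^ 2 = S ^ 2 + 1 := by
    have := Real.cosh_sq_sub_sinh_sq x
    nlinarith
  all_goals try rfl
  field_simp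
  nlinarith [hQpos', hCQpos, sq_nonneg (C - Q), sq_nonneg (C + Q)]

/-- `F` is differentiable, and every critical point `u*` of `F` satisfies the
generalized Curie–Weiss mean-field equation
`u* = sinh(βJu*+βh)/√(sinh(βJu*+βh)² + e^{-4βJ₀})`. -/
theorem critical_points_satisfy_mean_field
    (β J J₀ h : ℝ) (hβ : 0 < β) (hJ : 0 < J) :
    Differentiable ℝ (rateF β J J₀ h) ∧
      ∀ u : ℝ, deriv (rateF β J J₀ h) u = 0 →
        u = Real.sinh (β * J * u + β * h) /
              Real.sqrt ((Real.sinh (β * J * u + β * h)) ^ 2 + Real.exp (-(4 * β * J₀))) := by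
  constructor
  · exact fun u => (hasDerivAt_rateF β J J₀ h u).differentiableAt
  · intro u hu
    have hd := (hasDerivAt_rateF β J J₀ h u).deriv
    rw [hu] at hd
    have hβJ : β * J ≠ 0 := by positivity
    have : β * J * u = β * J * (Real.sinh (β * J * u + β * h) /
        Real.sqrt ((Real.sinh (β * J * u + β * h)) ^ 2 + Real.exp (-(4 * β * J₀)))) := by
      rw [mul_div_assoc] at hd; linarith
    exact mul_left_cancel₀ hβJ this
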